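/- Let N ≥ 2 and a : ℕ → ℝ with a(k+1) < a(k) for all 1 ≤ k ≤ N−1 and a(1) > 0 > a(N). Define D(p) = Σ_{k=1}^{N} C(N−1, k−1)·p^{k−1}·(1−p)^{N−k}·a(k), and for p, q ∈ [0, 1] define the deviation payoff φ_p(q) = (2q − 1)·D(p). Then there exists a unique p* ∈ (0, 1) such that φ_{p*}(p*) ≥ φ_{p*}(q) for every q ∈ [0, 1]; moreover this p* is characterized by D(p*) = 0. In particular, a fully mixed probability p ∈ (0, 1) is a symmetric Nash equilibrium (no player can improve its expected payoff by unilaterally deviating to any q ∈ [0, 1]) if and only if D(p) = 0. -/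

import Mathlib

open Finset

private lemma bern_deriv_aux (n : ℕ) (a : ℕ → ℝ) (p : ℝ) :
    HasDerivAt
      (fun p : ℝ => ∑ j ∈ range (n + 2),
        ((n + 1).choose j : ℝ) * p ^ j * (1 - p) ^ (n + 1 - j) * a (j + 1))
      ((n + 1 : ℝ) * ∑ i ∈ range (n + 1),
        (n.choose i : ℝ) * p ^ i * (1 - p) ^ (n - i) * (a (i + 2) - a (i + 1))) p := by
  have key : ∀ j : ℕ, HasDerivAt
      (fun p : ℝ => ((n + 1).choose j : ℝ) * p ^ j * (1 - p) ^ (n + 1 - j) * a (j + 1))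
      (((n + 1).choose j : ℝ) * a (j + 1) *
        ((j : ℝ) * p ^ (j - 1) * (1 - p) ^ (n + 1 - j)
          - ((n + 1 - j : ℕ) : ℝ) * p ^ j * (1 - p) ^ (n + 1 - j - 1))) p := by
    intro j
    have h1 : HasDerivAt (fun p : ℝ => p ^ j) ((j : ℝ) * p ^ (j - 1)) p := hasDerivAt_pow j p
    have h3 : HasDerivAt (fun p : ℝ => 1 - p) (-1) p := by
      simpa using (hasDerivAt_id p).const_sub 1
    have h2 : HasDerivAt (fun p : ℝ => (1 - p) ^ (n + 1 - j))
        (-(((n + 1 - j : ℕ) : ℝ) * (1 - p) ^ (n + 1 - j - 1))) p := by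
      have := (hasDerivAt_pow (n + 1 - j) (1 - p)).comp p h3
      convert this using 1
      · rfl
      · rfl
      · rfl
      ring
    have base := ((h1.mul h2).const_mul ((n + 1).choose j : ℝ)).mul_const (a (j + 1))
    convert base using 1
    · rfl
    · rfl
    · funext x; simp only [Pi.mul_apply]; ring
    · ring
  have hsum := HasDerivAt.fun_sum (u := range (n + 2)) (fun j _ => key j)
  convert hsum using 1
  · rfl
  · rfl
  rw [show (∑ j ∈ range (n + 2), ((n + 1).choose j : ℝ) * a (j + 1) *
        ((j : ℝ) * p ^ (j - 1) * (1 - p) ^ (n + 1 - j)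
          - ((n + 1 - j : ℕ) : ℝ) * p ^ j * (1 - p) ^ (n + 1 - j - 1)))
      = (∑ j ∈ range (n + 2), ((n + 1).choose j : ℝ) * a (j + 1) *
          ((j : ℝ) * p ^ (j - 1) * (1 - p) ^ (n + 1 - j)))
        - (∑ j ∈ range (n + 2), ((n + 1).choose j : ℝ) * a (j + 1) *
          (((n + 1 - j : ℕ) : ℝ) * p ^ j * (1 - p) ^ (n + 1 - j - 1))) from by
        rw [← sum_sub_distrib]; exact sum_congr rfl fun j _ => by ring]
  have hA : (∑ j ∈ range (n + 2), ((n + 1).choose j : ℝ) * a (j + 1) *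
        ((j : ℝ) * p ^ (j - 1) * (1 - p) ^ (n + 1 - j)))
      = ∑ i ∈ range (n + 1), (n + 1 : ℝ) * (n.choose i : ℝ) * p ^ i * (1 - p) ^ (n - i) * a (i + 2) := by
    rw [sum_range_succ']
    simp only [Nat.cast_zero, zero_mul, mul_zero, add_zero]
    refine sum_congr rfl fun i hi => ?_
    have h1 : n + 1 - (i + 1) = n - i := by omega
    have h2 : (i + 1) - 1 = i := by omega
    have hc : ((n + 1).choose (i + 1) * (i + 1) : ℕ) = (n + 1) * n.choose i :=
      (Nat.add_one_mul_choose_eq n i).symm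
    have hc' : (((n + 1).choose (i + 1) : ℝ)) * ((i : ℝ) + 1) = ((n : ℝ) + 1) * (n.choose i : ℝ) := by
      exact_mod_cast congrArg (Nat.cast : ℕ → ℝ) hc
    rw [h1, h2]
    push_cast
    linear_combination (a (i + 2) * p ^ i * (1 - p) ^ (n - i)) * hc'
  have hB : (∑ j ∈ range (n + 2), ((n + 1).choose j : ℝ) * a (j + 1) *
        (((n + 1 - j : ℕ) : ℝ) * p ^ j * (1 - p) ^ (n + 1 - j - 1)))
      = ∑ i ∈ range (n + 1), (n + 1 : ℝ) * (n.choose i : ℝ) * p ^ i * (1 - p) ^ (n - i) * a (i + 1) := by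
    rw [sum_range_succ]
    simp only [Nat.sub_self, Nat.cast_zero, zero_mul, mul_zero, add_zero]
    refine sum_congr rfl fun i hi => ?_
    have hi' : i ≤ n := by simpa [Nat.lt_succ_iff] using hi
    have h1 : n + 1 - i - 1 = n - i := by omega
    have hc : ((n + 1).choose i * (n + 1 - i) : ℕ) = (n + 1) * n.choose i := by
      rw [← Nat.choose_succ_right_eq]
      exact (Nat.add_one_mul_choose_eq n i).symm
    have hc' : (((n + 1).choose i : ℝ)) * (((n + 1 - i : ℕ)) : ℝ) = ((n : ℝ) + 1) * (n.choose i : ℝ) := by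
      exact_mod_cast congrArg (Nat.cast : ℕ → ℝ) hc
    rw [h1]
    linear_combination (a (i + 1) * p ^ i * (1 - p) ^ (n - i)) * hc'
  rw [hA, hB, mul_sum, ← sum_sub_distrib]
  exact sum_congr rfl fun i _ => by ring

open Finset in
/-- in the symmetric mixed game with deviation payoff
`φ_p(q) = (2q − 1)·D(p)` where
`D(p) = Σ_{k=1}^{N} C(N−1,k−1) p^{k−1} (1−p)^{N−k} a(k)`, `a` strictly
decreasing with `a(1) > 0 > a(N)`: there is a unique `p* ∈ (0,1)` such that
`φ_{p*}(p*) ≥ φ_{p*}(q)` for all `q ∈ [0,1]`, characterized by `D(p*) = 0`;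
moreover a fully mixed `p ∈ (0,1)` is a symmetric Nash equilibrium iff
`D(p) = 0`. -/
theorem fully_mixed_symmetric_NE_characterization
    (N : ℕ) (hN : 2 ≤ N) (a : ℕ → ℝ)
    (ha : ∀ k, 1 ≤ k → k ≤ N - 1 → a (k + 1) < a k)
    (ha1 : a 1 > 0) (haN : 0 > a N)
    (D : ℝ → ℝ)
    (hD : ∀ p, D p = ∑ k ∈ Finset.Icc 1 N,
      ((N - 1).choose (k - 1) : ℝ) * p ^ (k - 1) * (1 - p) ^ (N - k) * a k)
    (φ : ℝ → ℝ → ℝ) (hφ : ∀ p q, φ p q = (2 * q - 1) * D p) :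
    (∃! p : ℝ, p ∈ Set.Ioo (0 : ℝ) 1 ∧
        (∀ q ∈ Set.Icc (0 : ℝ) 1, φ p q ≤ φ p p) ∧ D p = 0) ∧
    (∀ p ∈ Set.Ioo (0 : ℝ) 1,
        (∀ q ∈ Set.Icc (0 : ℝ) 1, φ p q ≤ φ p p) ↔ D p = 0) := by
  obtain ⟨n, rfl⟩ : ∃ n, N = n + 2 := ⟨N - 2, by omega⟩
  -- rewrite D in range form
  have hDr : ∀ p, D p = ∑ j ∈ range (n + 2),
      ((n + 1).choose j : ℝ) * p ^ j * (1 - p) ^ (n + 1 - j) * a (j + 1) := by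
    intro p
    rw [hD, ← Finset.Ico_add_one_right_eq_Icc, Finset.sum_Ico_eq_sum_range]
    refine sum_congr (by norm_num) fun j hj => ?_
    have h1 : 1 + j - 1 = j := by omega
    have h2 : n + 2 - (1 + j) = n + 1 - j := by omega
    have h3 : n + 2 - 1 = n + 1 := by omega
    rw [h1, h2, h3, Nat.add_comm 1 j]
  have hDfun : D = fun p => ∑ j ∈ range (n + 2),
      ((n + 1).choose j : ℝ) * p ^ j * (1 - p) ^ (n + 1 - j) * a (j + 1) := funext hDr
  have hderiv : ∀ p : ℝ, HasDerivAt D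
      ((n + 1 : ℝ) * ∑ i ∈ range (n + 1),
        (n.choose i : ℝ) * p ^ i * (1 - p) ^ (n - i) * (a (i + 2) - a (i + 1))) p := by
    intro p; rw [hDfun]; exact bern_deriv_aux n a p
  have hcont : Continuous D := by
    rw [continuous_iff_continuousAt]; exact fun p => (hderiv p).continuousAt
  have hEneg : ∀ p ∈ Set.Ioo (0 : ℝ) 1,
      (n + 1 : ℝ) * (∑ i ∈ range (n + 1),
        (n.choose i : ℝ) * p ^ i * (1 - p) ^ (n - i) * (a (i + 2) - a (i + 1))) < 0 := by
    intro p hp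
    apply mul_neg_of_pos_of_neg (by positivity)
    refine sum_neg (fun i hi => ?_) ⟨0, by simp⟩
    have hi' : i ≤ n := by simpa [Nat.lt_succ_iff] using hi
    have hchoose : (0 : ℝ) < (n.choose i : ℝ) := by
      exact_mod_cast Nat.choose_pos hi'
    have hpp : (0 : ℝ) < p ^ i := pow_pos hp.1 i
    have hqq : (0 : ℝ) < (1 - p) ^ (n - i) := pow_pos (by linarith [hp.2]) _
    have hlt : a (i + 2) < a (i + 1) := ha (i + 1) (by omega) (by omega)
    have : a (i + 2) - a (i + 1) < 0 := by linarith
    have h1 : (0:ℝ) < (n.choose i : ℝ) * p ^ i * (1 - p) ^ (n - i) := by positivity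
    nlinarith
  have hanti : StrictAntiOn D (Set.Icc 0 1) := by
    apply strictAntiOn_of_deriv_neg (convex_Icc 0 1) hcont.continuousOn
    intro x hx
    rw [interior_Icc] at hx
    rw [(hderiv x).deriv]
    exact hEneg x hx
  have hD0 : D 0 = a 1 := by
    rw [hDr]
    rw [Finset.sum_eq_single 0]
    · norm_num
    · intro j _ hj
      simp [zero_pow hj]
    · intro h; simp at h
  have hD1 : D 1 = a (n + 2) := by
    rw [hDr]
    rw [Finset.sum_eq_single (n + 1)]
    · norm_num
    · intro j hj hj'
      have : n + 1 - j ≠ 0 := by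
        simp only [mem_range] at hj; omega
      simp [zero_pow this]
    · intro h; simp at h
  -- existence of a root via IVT
  have hIVT : (0 : ℝ) ∈ D '' Set.Ioo 0 1 := by
    apply intermediate_value_Ioo' (by norm_num : (0:ℝ) ≤ 1) hcont.continuousOn
    rw [hD0, hD1]
    exact ⟨haN, ha1⟩
  obtain ⟨p₀, hp₀, hDp₀⟩ := hIVT
  -- Nash characterization
  have hiff : ∀ p ∈ Set.Ioo (0 : ℝ) 1,
      (∀ q ∈ Set.Icc (0 : ℝ) 1, φ p q ≤ φ p p) ↔ D p = 0 := by
    intro p hp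
    constructor
    · intro h
      have h1 := h 1 ⟨by norm_num, le_refl 1⟩
      have h0 := h 0 ⟨le_refl 0, by norm_num⟩
      rw [hφ, hφ] at h1
      rw [hφ, hφ] at h0
      rcases lt_trichotomy (D p) 0 with hlt | heq | hgt
      · nlinarith [hp.1, hp.2]
      · exact heq
      · nlinarith [hp.1, hp.2]
    · intro h q _
      rw [hφ, hφ, h]
      ring_nf
      exact le_refl _
  refine ⟨⟨p₀, ⟨hp₀, (hiff p₀ hp₀).mpr hDp₀, hDp₀⟩, ?_⟩, hiff⟩
  rintro y ⟨hy, _, hDy⟩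
  exact hanti.injOn (Set.Ioo_subset_Icc_self hy) (Set.Ioo_subset_Icc_self hp₀)
    (hDy.trans hDp₀.symm)
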